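/- Let K be a field of characteristic ≠ 2 and k ≥ 1. Let M₀ be the (k+1)×2k block matrix [[I_k, 0],[0, 0]] and J the 2k×2k block matrix [[0, I_k],[I_k, 0]]. The set T = {N ∈ Mat_{(k+1)×2k}(K) : M₀ · J · Nᵀ + N · J · M₀ᵀ = 0} is a K-linear subspace of the 2k(k+1)-dimensional space of (k+1)×2k matrices, of dimension (3k² + k)/2; equivalently, T has codimension k(k+1)/2 + k in Mat_{(k+1)×2k}(K). -/

import Mathlib

open Matrix

section Aux

variable {K : Type*} [Field K] {k : ℕ}

abbrev LowIdx (k : ℕ) := {p : Fin k × Fin k // p.2 < p.1}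

def skewOf (b : LowIdx k → K) : Matrix (Fin k) (Fin k) K :=
  Matrix.of fun i j =>
    if h : j < i then b ⟨(i, j), h⟩ else if h' : i < j then -b ⟨(j, i), h'⟩ else 0

lemma skewOf_apply (b : LowIdx k → K) (i j : Fin k) :
    skewOf b i j = if h : j < i then b ⟨(i, j), h⟩
      else if h' : i < j then -b ⟨(j, i), h'⟩ else 0 := rfl

def Phi (K : Type*) [Field K] (k : ℕ) :
    (Matrix (Fin k) (Fin k) K × (Fin k → K) × (LowIdx k → K)) →ₗ[K]
      Matrix (Fin k ⊕ Fin 1) (Fin k ⊕ Fin k) K where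
  toFun p := fromBlocks p.1 (skewOf p.2.2) (Matrix.of fun _ j => p.2.1 j) 0
  map_add' p q := by
    ext i j
    cases i <;> cases j <;>
      simp [skewOf_apply, Matrix.add_apply] <;> split_ifs <;> ring
  map_smul' c p := by
    ext i j
    cases i <;> cases j <;>
      simp [skewOf_apply, Matrix.smul_apply, smul_eq_mul] <;> split_ifs <;> ring

lemma Phi_injective : Function.Injective (Phi K k) := by
  intro p q h
  have h' : ∀ i j, Phi K k p i j = Phi K k q i j := fun i j => by rw [h]
  obtain ⟨A, c, b⟩ := p
  obtain ⟨A', c', b'⟩ := q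
  refine Prod.ext ?_ (Prod.ext ?_ ?_)
  · ext i j; simpa [Phi] using h' (Sum.inl i) (Sum.inl j)
  · funext j
    have := h' (Sum.inr 0) (Sum.inl j)
    simpa [Phi] using this
  · funext q
    obtain ⟨⟨i, j⟩, hij⟩ := q
    have := h' (Sum.inl i) (Sum.inr j)
    simpa [Phi, skewOf_apply, dif_pos hij] using this

end Aux

theorem tangent_space_dimension (K : Type*) [Field K] (hchar : (2 : K) ≠ 0)
    (k : ℕ) (hk : 1 ≤ k) :
    ∃ T : Submodule K (Matrix (Fin k ⊕ Fin 1) (Fin k ⊕ Fin k) K),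
      (∀ N : Matrix (Fin k ⊕ Fin 1) (Fin k ⊕ Fin k) K,
        N ∈ T ↔
          fromBlocks (1 : Matrix (Fin k) (Fin k) K) 0 0 (0 : Matrix (Fin 1) (Fin k) K) *
              (fromBlocks 0 1 1 0 : Matrix (Fin k ⊕ Fin k) (Fin k ⊕ Fin k) K) * Nᵀ +
            N * (fromBlocks 0 1 1 0 : Matrix (Fin k ⊕ Fin k) (Fin k ⊕ Fin k) K) *
              (fromBlocks (1 : Matrix (Fin k) (Fin k) K) 0 0
                (0 : Matrix (Fin 1) (Fin k) K))ᵀ = 0) ∧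
      Module.finrank K (Matrix (Fin k ⊕ Fin 1) (Fin k ⊕ Fin k) K) = 2 * k * (k + 1) ∧
      Module.finrank K T = (3 * k ^ 2 + k) / 2 ∧
      Module.finrank K (Matrix (Fin k ⊕ Fin 1) (Fin k ⊕ Fin k) K) - Module.finrank K T =
        k * (k + 1) / 2 + k := by
  -- block form of the equation
  have key : ∀ N : Matrix (Fin k ⊕ Fin 1) (Fin k ⊕ Fin k) K,
      (fromBlocks (1 : Matrix (Fin k) (Fin k) K) 0 0 (0 : Matrix (Fin 1) (Fin k) K) *
          (fromBlocks 0 1 1 0 : Matrix (Fin k ⊕ Fin k) (Fin k ⊕ Fin k) K) * Nᵀ +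
        N * (fromBlocks 0 1 1 0 : Matrix (Fin k ⊕ Fin k) (Fin k ⊕ Fin k) K) *
          (fromBlocks (1 : Matrix (Fin k) (Fin k) K) 0 0
            (0 : Matrix (Fin 1) (Fin k) K))ᵀ = 0) ↔
      ((N.toBlocks₁₂)ᵀ + N.toBlocks₁₂ = 0 ∧ N.toBlocks₂₂ = 0) := by
    intro N
    conv_lhs => rw [← fromBlocks_toBlocks N]
    rw [fromBlocks_transpose, fromBlocks_transpose]
    simp only [fromBlocks_multiply, fromBlocks_add, Matrix.mul_zero, Matrix.zero_mul,
      Matrix.mul_one, Matrix.one_mul, add_zero, zero_add, transpose_zero, transpose_one]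
    constructor
    · intro h
      have h12 := congrArg Matrix.toBlocks₁₁ h
      have h21 := congrArg Matrix.toBlocks₂₁ h
      simp only [toBlocks_fromBlocks₁₁, toBlocks_fromBlocks₂₁] at h12 h21
      refine ⟨by simpa using h12.trans (show toBlocks₁₁ (0 : Matrix (Fin k ⊕ Fin 1) (Fin k ⊕ Fin k) K) = 0 by ext; rfl),
        by simpa using h21.trans (show toBlocks₂₁ (0 : Matrix (Fin k ⊕ Fin 1) (Fin k ⊕ Fin k) K) = 0 by ext; rfl)⟩
    · rintro ⟨h1, h2⟩
      rw [h1, h2]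
      simp [← fromBlocks_zero]
  refine ⟨LinearMap.range (Phi K k), ?_, ?_, ?_, ?_⟩
  · intro N
    rw [key N]
    constructor
    · rintro ⟨⟨A, c, b⟩, rfl⟩
      constructor
      · ext i j
        simp only [Phi, LinearMap.coe_mk, AddHom.coe_mk, toBlocks_fromBlocks₁₂,
          Matrix.add_apply, transpose_apply, skewOf_apply, Matrix.zero_apply]
        rcases lt_trichotomy i j with h | h | h
        · rw [dif_pos h, dif_neg (asymm h), dif_pos h]; ring
        · subst h; simp
        · rw [dif_neg (asymm h), dif_pos h, dif_pos h]; ring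
      · ext i j
        simp [Phi]
    · rintro ⟨h1, h2⟩
      refine ⟨⟨N.toBlocks₁₁, fun j => N (Sum.inr 0) (Sum.inl j),
        fun q => N (Sum.inl q.1.1) (Sum.inr q.1.2)⟩, ?_⟩
      have hB : ∀ i j : Fin k, N (Sum.inl j) (Sum.inr i) + N (Sum.inl i) (Sum.inr j) = 0 := by
        intro i j
        have := congrFun (congrFun h1 i) j
        simpa [Matrix.toBlocks₁₂, Matrix.add_apply, transpose_apply] using this
      have hD : ∀ (i : Fin 1) (j : Fin k), N (Sum.inr i) (Sum.inr j) = 0 := by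
        intro i j
        have := congrFun (congrFun h2 i) j
        simpa [Matrix.toBlocks₂₂] using this
      ext i j
      rcases i with i | i
      · rcases j with j | j
        · simp [Phi, Matrix.toBlocks₁₁]
        · simp only [Phi, LinearMap.coe_mk, AddHom.coe_mk, fromBlocks_apply₁₂, skewOf_apply]
          rcases lt_trichotomy j i with h | h | h
          · rw [dif_pos h]
          · subst h
            rw [dif_neg (lt_irrefl j), dif_neg (lt_irrefl j)]
            have h2' : (2 : K) * N (Sum.inl j) (Sum.inr j) = 0 := by
              rw [two_mul]; exact hB j j
            rcases mul_eq_zero.mp h2' with h | h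
            · exact absurd h hchar
            · exact h.symm
          · rw [dif_neg (asymm h), dif_pos h]
            have := hB j i
            linear_combination -this
      · rcases j with j | j
        · have : i = 0 := Subsingleton.elim _ _
          subst this
          simp [Phi]
        · simp [Phi, hD i j]
  · rw [Module.finrank_matrix]
    simp only [Fintype.card_sum, Fintype.card_fin, Module.finrank_self, mul_one]
    ring
  · rw [LinearMap.finrank_range_of_inj Phi_injective]
    rw [Module.finrank_prod, Module.finrank_prod, Module.finrank_matrix,
      Module.finrank_fintype_fun_eq_card, Module.finrank_fintype_fun_eq_card]
    simp only [Fintype.card_sum, Fintype.card_fin, Module.finrank_self, mul_one]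
    -- card of LowIdx
    have hcard : Fintype.card (LowIdx k) * 2 = k * k - k := by
      have e : LowIdx k ≃ Σ i : Fin k, Fin i.val :=
        { toFun := fun p => ⟨p.1.1, ⟨p.1.2, p.2⟩⟩
          invFun := fun s => ⟨(s.1, ⟨s.2.1, lt_trans s.2.2 s.1.2⟩), s.2.2⟩
          left_inv := fun p => rfl
          right_inv := fun s => rfl }
      rw [Fintype.card_congr e, Fintype.card_sigma]
      simp only [Fintype.card_fin]
      rw [Fin.sum_univ_eq_sum_range (fun i => i), Finset.sum_range_id_mul_two]
      rw [Nat.mul_sub, mul_one]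
    obtain ⟨A, hA⟩ : ∃ A, k * k = A := ⟨k * k, rfl⟩
    have e3 : 3 * k ^ 2 + k = 3 * A + k := by rw [← hA]; ring
    have e5 : k ≤ A := by
      rw [← hA]; nlinarith
    rw [hA] at hcard
    rw [e3]
    omega
  · rw [LinearMap.finrank_range_of_inj Phi_injective]
    rw [Module.finrank_prod, Module.finrank_prod, Module.finrank_matrix,
      Module.finrank_fintype_fun_eq_card, Module.finrank_fintype_fun_eq_card,
      Module.finrank_matrix]
    simp only [Fintype.card_sum, Fintype.card_fin, Module.finrank_self, mul_one]
    have hcard : Fintype.card (LowIdx k) * 2 = k * k - k := by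
      have e : LowIdx k ≃ Σ i : Fin k, Fin i.val :=
        { toFun := fun p => ⟨p.1.1, ⟨p.1.2, p.2⟩⟩
          invFun := fun s => ⟨(s.1, ⟨s.2.1, lt_trans s.2.2 s.1.2⟩), s.2.2⟩
          left_inv := fun p => rfl
          right_inv := fun s => rfl }
      rw [Fintype.card_congr e, Fintype.card_sigma]
      simp only [Fintype.card_fin]
      rw [Fin.sum_univ_eq_sum_range (fun i => i), Finset.sum_range_id_mul_two]
      rw [Nat.mul_sub, mul_one]
    obtain ⟨A, hA⟩ : ∃ A, k * k = A := ⟨k * k, rfl⟩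
    have e1 : (k + 1) * (k + k) = 2 * A + 2 * k := by rw [← hA]; ring
    have e4 : k * (k + 1) = A + k := by rw [← hA]; ring
    have e5 : k ≤ A := by rw [← hA]; nlinarith
    rw [hA] at hcard
    rw [e1, e4]
    omega
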